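/- For all x in (0, π/2], it holds that 2/π + (1/π³)(π² − 4x²) ≤ sin(x)/x ≤ 2/π + ((π − 2)/π³)(π² − 4x²). -/

import Mathlib

open Real

private lemma mono_aux {f : ℝ → ℝ} (hf : Differentiable ℝ f)
    (h0 : f 0 = 0) (hd : ∀ y, 0 ≤ y → 0 ≤ deriv f y) {x : ℝ} (hx : 0 ≤ x) : 0 ≤ f x := by
  have := monotoneOn_of_deriv_nonneg (convex_Ici 0) hf.continuous.continuousOn
    hf.differentiableOn (fun y hy => hd y (le_of_lt (by simpa using hy)))
  have h := this (Set.self_mem_Ici) (Set.mem_Ici.2 hx) hx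
  simpa [h0] using h

lemma sin_ge_taylor {x : ℝ} (hx : 0 ≤ x) : x - x^3/6 ≤ Real.sin x := by
  have h : 0 ≤ Real.sin x - (x - x^3/6) := by
    apply mono_aux (f := fun y => Real.sin y - (y - y^3/6)) (by fun_prop) (by simp) ?_ hx
    intro y hy
    have hderiv : HasDerivAt (fun y => Real.sin y - (y - y^3/6)) (Real.cos y - (1 - y^2/2)) y := by
      have := (Real.hasDerivAt_sin y).sub ((hasDerivAt_id y).sub ((hasDerivAt_pow 3 y).div_const 6))
      exact this.congr_deriv (by push_cast; ring)
    rw [hderiv.deriv]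
    have := Real.one_sub_sq_div_two_le_cos (x := y)
    linarith
  linarith

lemma cos_le_taylor {x : ℝ} (hx : 0 ≤ x) : Real.cos x ≤ 1 - x^2/2 + x^4/24 := by
  have h : 0 ≤ 1 - x^2/2 + x^4/24 - Real.cos x := by
    apply mono_aux (f := fun y => 1 - y^2/2 + y^4/24 - Real.cos y) (by fun_prop) (by simp) ?_ hx
    intro y hy
    have hderiv : HasDerivAt (fun y => 1 - y^2/2 + y^4/24 - Real.cos y)
        (Real.sin y - (y - y^3/6)) y := by
      have := (((hasDerivAt_const y (1:ℝ)).sub ((hasDerivAt_pow 2 y).div_const 2)).add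
        ((hasDerivAt_pow 4 y).div_const 24)).sub (Real.hasDerivAt_cos y)
      exact this.congr_deriv (by push_cast; ring)
    rw [hderiv.deriv]
    linarith [sin_ge_taylor hy]
  linarith

lemma sin_le_taylor {x : ℝ} (hx : 0 ≤ x) : Real.sin x ≤ x - x^3/6 + x^5/120 := by
  have h : 0 ≤ x - x^3/6 + x^5/120 - Real.sin x := by
    apply mono_aux (f := fun y => y - y^3/6 + y^5/120 - Real.sin y) (by fun_prop) (by simp) ?_ hx
    intro y hy
    have hderiv : HasDerivAt (fun y => y - y^3/6 + y^5/120 - Real.sin y)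
        (1 - y^2/2 + y^4/24 - Real.cos y) y := by
      have := (((hasDerivAt_id y).sub ((hasDerivAt_pow 3 y).div_const 6)).add
        ((hasDerivAt_pow 5 y).div_const 120)).sub (Real.hasDerivAt_sin y)
      exact this.congr_deriv (by push_cast; ring)
    rw [hderiv.deriv]
    linarith [cos_le_taylor hy]
  linarith


set_option maxHeartbeats 1000000 in
theorem qi_quadratic (x : ℝ) (hx : x ∈ Set.Ioc 0 (π/2)) :
    2/π + 1/π^3 * (π^2 - 4*x^2) ≤ Real.sin x / x ∧
    Real.sin x / x ≤ 2/π + (π - 2)/π^3 * (π^2 - 4*x^2) := by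
  obtain ⟨hx0, hx2⟩ := hx
  have hπ : (3.141592:ℝ) < π := Real.pi_gt_d6
  have hπ' : π < 3.15 := Real.pi_lt_d2
  have hπ0 : (0:ℝ) < π := Real.pi_pos
  have hx0' : (0:ℝ) ≤ x := hx0.le
  have h2l : (9.869:ℝ) ≤ π^2 := by nlinarith
  have h2u : π^2 ≤ (9.9225:ℝ) := by nlinarith
  have h3l : (31.006:ℝ) ≤ π^3 := by nlinarith
  have h3u : π^3 ≤ (31.256:ℝ) := by nlinarith
  constructor
  · have h1 : 2/π + 1/π^3 * (π^2 - 4*x^2) = (3*π^2 - 4*x^2)/π^3 := by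
      field_simp; ring
    rw [h1, div_le_div_iff₀ (by positivity) hx0]
    rcases le_or_gt x 1 with hc | hc
    · have A : (x - x^3/6) * π^3 ≤ Real.sin x * π^3 :=
        mul_le_mul_of_nonneg_right (sin_ge_taylor hx0') (by positivity)
      have hx3 : x^3 ≤ x := by nlinarith
      have B : x^3 * (π^3/6 - 4) ≤ x * (π^3/6 - 4) :=
        mul_le_mul_of_nonneg_right hx3 (by nlinarith)
      have C : x * (π^3/6 - 4) ≤ x * (π^3 - 3*π^2) :=
        mul_le_mul_of_nonneg_left (by nlinarith) hx0'
      nlinarith [A, B, C]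
    · have hy0 : (0:ℝ) ≤ π/2 - x := by linarith
      have hs : 1 - (π/2 - x)^2/2 ≤ Real.sin x := by
        have := Real.one_sub_sq_div_two_le_cos (x := π/2 - x)
        rwa [Real.cos_pi_div_two_sub] at this
      have A : (1 - (π/2 - x)^2/2) * π^3 ≤ Real.sin x * π^3 :=
        mul_le_mul_of_nonneg_right hs (by positivity)
      have key : 0 ≤ (π/2 - x)^2 * (6*π - π^3/2 - 4*(π/2 - x)) :=
        mul_nonneg (sq_nonneg _) (by nlinarith)
      nlinarith [A, key]
  · have h1 : 2/π + (π - 2)/π^3 * (π^2 - 4*x^2) = (π^3 - 4*(π-2)*x^2)/π^3 := by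
      field_simp; ring
    rw [h1, div_le_div_iff₀ hx0 (by positivity)]
    rcases le_or_gt x (13/10) with hc | hc
    · have A : Real.sin x * π^3 ≤ (x - x^3/6 + x^5/120) * π^3 :=
        mul_le_mul_of_nonneg_right (sin_le_taylor hx0') (by positivity)
      have hx2' : x^2 ≤ 1.69 := by nlinarith
      have E : x^5 * π^3 ≤ 1.69 * (x^3 * π^3) := by
        have h5 : x^5 ≤ 1.69 * x^3 := by nlinarith [pow_nonneg hx0' 3]
        nlinarith [mul_le_mul_of_nonneg_right h5 (le_of_lt (pow_pos hπ0 3))]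
      have key : 0 ≤ x^3 * (π^3/6 - 4*(π-2) - π^3*1.69/120) :=
        mul_nonneg (pow_nonneg hx0' 3) (by nlinarith)
      nlinarith [A, E, key]
    · have hy0 : (0:ℝ) ≤ π/2 - x := by linarith
      have hy1 : π/2 - x ≤ 0.275 := by nlinarith
      have hs : Real.sin x ≤ 1 - (π/2 - x)^2/2 + (π/2 - x)^4/24 := by
        have := cos_le_taylor hy0
        rwa [Real.cos_pi_div_two_sub] at this
      have A : Real.sin x * π^3 ≤ (1 - (π/2 - x)^2/2 + (π/2 - x)^4/24) * π^3 :=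
        mul_le_mul_of_nonneg_right hs (by positivity)
      have hy2' : (π/2 - x)^2 ≤ 0.076 := by nlinarith
      have hy3 : (π/2 - x)^3 ≤ 0.021 := by
        nlinarith [mul_le_mul hy2' hy1 hy0 (by norm_num : (0:ℝ) ≤ 0.076)]
      have hy3' : (π/2 - x)^3 * π^3 ≤ 0.021 * 31.256 := by
        nlinarith [pow_nonneg hy0 3, mul_le_mul hy3 h3u (by positivity) (by norm_num : (0:ℝ) ≤ 0.021)]
      have key : 0 ≤ (π/2 - x) * ((2*π^3 - 6*π^2) + (π^3/2 - 6*π^2 + 12*π)*(π/2 - x)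
          + 4*(π-2)*(π/2 - x)^2 - π^3*(π/2 - x)^3/24) := by
        apply mul_nonneg hy0
        have hmix : 0 ≤ (0.275 - (π/2 - x)) * (6*π^2 - 12*π - π^3/2) :=
          mul_nonneg (by linarith) (by nlinarith)
        nlinarith [hmix, hy3', mul_nonneg (mul_nonneg hy0 hy0) (by linarith : (0:ℝ) ≤ π - 2)]
      nlinarith [A, key]
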